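/- Suppose there exists a bijection σ : P → P such that (x,y,z) ∈ 𝒯 implies (σx, σy, σz) ∈ 𝒯, and such that the cyclic group generated by σ acts simply transitively on P. If q ≢ 1 (mod 3), then the additive order of ε in A_𝒯 is exactly q−1. -/

import Mathlib

/-- A triangle presentation compatible with the bijection `lam : P ≃ L`:
a set of triples satisfying conditions (i), (ii), (iii). -/
structure IsTrianglePresentation {P L : Type*} [Membership P L]
    (lam : P ≃ L) (T : Set (P × P × P)) : Prop where
  exists_iff : ∀ x y : P, (∃ z : P, (x, y, z) ∈ T) ↔ y ∈ lam x
  cyclic : ∀ x y z : P, (x, y, z) ∈ T → (y, z, x) ∈ T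
  unique : ∀ x y z z' : P, (x, y, z) ∈ T → (x, y, z') ∈ T → z = z'

open Classical in
/-- Relators of `A_𝒯`: generators are the points of `P` plus one extra generator
`ε` (encoded as `none : Option P`). -/
def triangleRels {P L : Type*} [Fintype P] [Membership P L]
    (lam : P ≃ L) (T : Set (P × P × P)) : Set (FreeAbelianGroup (Option P)) :=
  (Set.range fun x : P =>
      (∑ y ∈ Finset.univ.filter fun y : P => ¬ y ∈ lam x, FreeAbelianGroup.of (some y))
        - FreeAbelianGroup.of (some x)) ∪
  ((fun t : P × P × P =>
      FreeAbelianGroup.of (some t.1) + FreeAbelianGroup.of (some t.2.1)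
        + FreeAbelianGroup.of (some t.2.2) - FreeAbelianGroup.of (none : Option P)) '' T) ∪
  {(∑ x : P, FreeAbelianGroup.of (some x)) - FreeAbelianGroup.of (none : Option P)}

/-- The abelian group `A_𝒯`, presented by generators `P ∪ {ε}` and the relations above. -/
abbrev TriangleGroup {P L : Type*} [Fintype P] [Membership P L]
    (lam : P ≃ L) (T : Set (P × P × P)) : Type _ :=
  FreeAbelianGroup (Option P) ⧸ AddSubgroup.closure (triangleRels lam T)

/-- The image in `A_𝒯` of the generator corresponding to a point `x ∈ P`. -/
def triangleGen {P L : Type*} [Fintype P] [Membership P L]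
    (lam : P ≃ L) (T : Set (P × P × P)) (x : P) : TriangleGroup lam T :=
  QuotientAddGroup.mk (FreeAbelianGroup.of (some x))

/-- The image in `A_𝒯` of the generator `ε`. -/
def triangleEps {P L : Type*} [Fintype P] [Membership P L]
    (lam : P ≃ L) (T : Set (P × P × P)) : TriangleGroup lam T :=
  QuotientAddGroup.mk (FreeAbelianGroup.of (none : Option P))

open Classical in
theorem stmt12 {P L : Type*} [Fintype P] [Fintype L] [Membership P L]
    [Configuration.ProjectivePlane P L] (q : ℕ) (hq : 2 ≤ q)
    (horder : Configuration.ProjectivePlane.order P L = q)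
    (lam : P ≃ L) (T : Set (P × P × P)) (hT : IsTrianglePresentation lam T)
    (σ : Equiv.Perm P)
    (hσT : ∀ x y z : P, (x, y, z) ∈ T → (σ x, σ y, σ z) ∈ T)
    (hσreg : ∀ p p' : P, ∃! n : ℕ, n < Fintype.card P ∧ (σ ^ n) p = p')
    (hq3 : q % 3 ≠ 1) :
    addOrderOf (triangleEps lam T) = q - 1 := by
  classical
  set ε := triangleEps lam T with hεdef
  set s := triangleGen lam T with hsdef
  -- basic cardinalities
  have hq2pos : 0 < q ^ 2 := by positivity
  obtain ⟨m, hmq⟩ : ∃ m : ℕ, q ^ 2 = m + 1 :=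
    ⟨q ^ 2 - 1, (Nat.succ_pred_eq_of_pos hq2pos).symm⟩
  have hcardP : Fintype.card P = m + q + 2 := by
    rw [Configuration.ProjectivePlane.card_points P L, horder, hmq]; ring
  have hline : ∀ x : P, (Finset.univ.filter fun y : P => y ∈ lam x).card = q + 1 := by
    intro x
    calc (Finset.univ.filter fun y : P => y ∈ lam x).card
        = Fintype.card {y : P // y ∈ lam x} := (Fintype.card_subtype _).symm
      _ = Nat.card {y : P // y ∈ lam x} := Nat.card_eq_fintype_card.symm
      _ = Configuration.pointCount P (lam x) := rfl
      _ = q + 1 := by rw [Configuration.ProjectivePlane.pointCount_eq, horder]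
  have hcardNotLine : ∀ x : P,
      (Finset.univ.filter fun y : P => ¬ y ∈ lam x).card = m + 1 := by
    intro x
    rw [Finset.filter_not, Finset.card_sdiff_of_subset (Finset.filter_subset _ _), Finset.card_univ,
      hcardP, hline]
    omega
  have hlines : ∀ y : P, (Finset.univ.filter fun x : P => y ∈ lam x).card = q + 1 := by
    intro y
    calc (Finset.univ.filter fun x : P => y ∈ lam x).card
        = Fintype.card {x : P // y ∈ lam x} := (Fintype.card_subtype _).symm
      _ = Fintype.card {l : L // y ∈ l} :=
          Fintype.card_congr (Equiv.subtypeEquiv lam fun x => Iff.rfl)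
      _ = Nat.card {l : L // y ∈ l} := Nat.card_eq_fintype_card.symm
      _ = Configuration.lineCount L y := rfl
      _ = q + 1 := by rw [Configuration.ProjectivePlane.lineCount_eq, horder]
  have hcardNotLines : ∀ y : P,
      (Finset.univ.filter fun x : P => ¬ y ∈ lam x).card = m + 1 := by
    intro y
    rw [Finset.filter_not, Finset.card_sdiff_of_subset (Finset.filter_subset _ _), Finset.card_univ,
      hcardP, hlines]
    omega
  -- the relations hold in the quotient
  let π : FreeAbelianGroup (Option P) →+ TriangleGroup lam T :=
    QuotientAddGroup.mk' (AddSubgroup.closure (triangleRels lam T))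
  have hπ : ∀ r ∈ triangleRels lam T, π r = 0 := fun r hr =>
    (QuotientAddGroup.eq_zero_iff r).2 (AddSubgroup.subset_closure hr)
  have hA : ∀ x : P, (∑ y ∈ Finset.univ.filter fun y : P => ¬ y ∈ lam x, s y) = s x := by
    intro x
    have h := hπ _ (Or.inl (Or.inl ⟨x, rfl⟩))
    rw [map_sub, map_sum, sub_eq_zero] at h
    exact h
  have hB : ∀ x y z : P, (x, y, z) ∈ T → s x + s y + s z = ε := by
    intro x y z hxyz
    have h := hπ _ (Or.inl (Or.inr ⟨(x, y, z), hxyz, rfl⟩))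
    rw [map_sub, map_add, map_add, sub_eq_zero] at h
    exact h
  have hC : (∑ x : P, s x) = ε := by
    have h := hπ _ (Or.inr rfl)
    rw [map_sub, map_sum, sub_eq_zero] at h
    exact h
  -- upper bound, part 1 : m • ε = 0
  have h1 : ε = (m + 1) • ε := by
    calc ε = ∑ x : P, s x := hC.symm
      _ = ∑ x : P, ∑ y ∈ Finset.univ.filter fun y : P => ¬ y ∈ lam x, s y :=
          Finset.sum_congr rfl fun x _ => (hA x).symm
      _ = ∑ x : P, ∑ y : P, if ¬ y ∈ lam x then s y else 0 := by
          simp only [Finset.sum_filter]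
      _ = ∑ y : P, ∑ x : P, if ¬ y ∈ lam x then s y else 0 := Finset.sum_comm
      _ = ∑ y : P, (Finset.univ.filter fun x : P => ¬ y ∈ lam x).card • s y := by
          refine Finset.sum_congr rfl fun y _ => ?_
          rw [← Finset.sum_filter, Finset.sum_const]
      _ = ∑ y : P, (m + 1) • s y :=
          Finset.sum_congr rfl fun y _ => by rw [hcardNotLines y]
      _ = (m + 1) • ∑ y : P, s y := (Finset.smul_sum).symm
      _ = (m + 1) • ε := by rw [hC]
  have e1 : m • ε = 0 := by
    have h' := h1
    rw [succ_nsmul] at h'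
    have h'' : m • ε + ε = 0 + ε := by rw [zero_add]; exact h'.symm
    exact add_right_cancel h''
  -- σ-orbit sums
  have horbit : ∀ p : P,
      (∑ n ∈ Finset.range (Fintype.card P), s ((σ ^ n) p)) = ∑ x : P, s x := by
    intro p
    refine Finset.sum_bij (fun n _ => (σ ^ n) p) (fun n _ => Finset.mem_univ _) ?_ ?_
      (fun n _ => rfl)
    · intro a ha b hb hab
      obtain ⟨k, -, hk⟩ := hσreg p ((σ ^ a) p)
      rw [hk a ⟨Finset.mem_range.1 ha, rfl⟩, hk b ⟨Finset.mem_range.1 hb, hab.symm⟩]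
    · intro x _
      obtain ⟨n, ⟨hn, hx⟩, -⟩ := hσreg p x
      exact ⟨n, Finset.mem_range.2 hn, hx⟩
  have hσn : ∀ (n : ℕ) (x y z : P), (x, y, z) ∈ T →
      ((σ ^ n) x, (σ ^ n) y, (σ ^ n) z) ∈ T := by
    intro n
    induction n with
    | zero => simpa using fun x y z h => h
    | succ n ih =>
      intro x y z h
      have h2 := hσT _ _ _ (ih x y z h)
      have e : ∀ w : P, (σ ^ (n + 1)) w = σ ((σ ^ n) w) := by
        intro w
        rw [pow_succ', Equiv.Perm.mul_apply]
      rw [e x, e y, e z]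
      exact h2
  -- a triangle exists
  obtain ⟨x₀⟩ : Nonempty P := by
    have : 0 < Fintype.card P := by rw [hcardP]; omega
    exact Fintype.card_pos_iff.1 this
  obtain ⟨y₀, hy₀⟩ : ∃ y : P, y ∈ lam x₀ := by
    have hne : (Finset.univ.filter fun y : P => y ∈ lam x₀).Nonempty := by
      rw [← Finset.card_pos, hline x₀]; omega
    obtain ⟨y, hy⟩ := hne
    exact ⟨y, (Finset.mem_filter.1 hy).2⟩
  obtain ⟨z₀, hz₀⟩ := (hT.exists_iff x₀ y₀).2 hy₀
  -- upper bound, part 2 : (m + q - 1) • ε = 0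
  have h2 : (Fintype.card P) • ε = 3 • ε := by
    have hsum : (∑ n ∈ Finset.range (Fintype.card P),
        (s ((σ ^ n) x₀) + s ((σ ^ n) y₀) + s ((σ ^ n) z₀))) = (Fintype.card P) • ε := by
      rw [Finset.sum_congr rfl fun n _ => hB _ _ _ (hσn n x₀ y₀ z₀ hz₀), Finset.sum_const,
        Finset.card_range]
    rw [← hsum, Finset.sum_add_distrib, Finset.sum_add_distrib, horbit x₀, horbit y₀,
      horbit z₀, hC]
    abel
  have e2 : (m + q - 1) • ε = 0 := by
    have hsplit : Fintype.card P = (m + q - 1) + 3 := by rw [hcardP]; omega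
    rw [hsplit, add_nsmul] at h2
    have h2' : (m + q - 1) • ε + 3 • ε = 0 + 3 • ε := by rw [zero_add]; exact h2
    exact add_right_cancel h2'
  have ediv1 : addOrderOf ε ∣ m := addOrderOf_dvd_of_nsmul_eq_zero e1
  have ediv2 : addOrderOf ε ∣ m + q - 1 := addOrderOf_dvd_of_nsmul_eq_zero e2
  have hupper : addOrderOf ε ∣ q - 1 := by
    have h := Nat.dvd_sub ediv2 ediv1
    have : m + q - 1 - m = q - 1 := by omega
    rwa [this] at h
  -- lower bound : q - 1 ∣ addOrderOf ε
  let f : Option P → ZMod (q - 1) := fun o => o.elim 3 fun _ => 1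
  let φ : FreeAbelianGroup (Option P) →+ ZMod (q - 1) := FreeAbelianGroup.lift f
  have hφs : ∀ x : P, φ (FreeAbelianGroup.of (some x)) = 1 := fun x =>
    FreeAbelianGroup.lift_apply_of f _
  have hφe : φ (FreeAbelianGroup.of (none : Option P)) = 3 := FreeAbelianGroup.lift_apply_of f _
  have hq1 : ((q : ℕ) : ZMod (q - 1)) = 1 := by
    have hq' : q = (q - 1) + 1 := by omega
    rw [hq', Nat.cast_add, Nat.cast_one, ZMod.natCast_self, zero_add]
  have hm0 : ((m : ℕ) : ZMod (q - 1)) = 0 := by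
    have h1' : ((m + 1 : ℕ) : ZMod (q - 1)) = 1 := by
      rw [← hmq]; push_cast; rw [hq1]; ring
    push_cast at h1'
    simpa using h1'
  have hker : ∀ r ∈ triangleRels lam T, φ r = 0 := by
    rintro r ((⟨x, rfl⟩ | ⟨t, ht, rfl⟩) | rfl)
    · rw [map_sub, map_sum]
      simp only [hφs]
      rw [Finset.sum_const, hcardNotLine x, nsmul_eq_mul, mul_one, Nat.cast_add,
        Nat.cast_one, hm0, zero_add, sub_self]
    · rw [map_sub, map_add, map_add, hφs, hφs, hφs, hφe]
      norm_num
    · rw [map_sub, map_sum]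
      simp only [hφs]
      rw [Finset.sum_const, Finset.card_univ, hcardP, hφe, nsmul_eq_mul, mul_one]
      push_cast
      rw [hq1, hm0]
      norm_num
  have hclos : AddSubgroup.closure (triangleRels lam T) ≤ φ.ker :=
    (AddSubgroup.closure_le _).2 fun r hr => AddMonoidHom.mem_ker.2 (hker r hr)
  let ψ : TriangleGroup lam T →+ ZMod (q - 1) :=
    QuotientAddGroup.lift _ φ fun x hx => AddMonoidHom.mem_ker.1 (hclos hx)
  have hψε : ψ ε = ((3 : ℕ) : ZMod (q - 1)) := by
    have : ψ ε = φ (FreeAbelianGroup.of (none : Option P)) := rfl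
    rw [this, hφe]
    norm_num
  have h3 : addOrderOf (((3 : ℕ)) : ZMod (q - 1)) = q - 1 := by
    rw [ZMod.addOrderOf_coe 3 (by omega : q - 1 ≠ 0)]
    have hnd : ¬ (3 ∣ q - 1) := by omega
    have hcop : Nat.gcd (q - 1) 3 = 1 :=
      Nat.Coprime.symm ((Nat.prime_three.coprime_iff_not_dvd).2 hnd)
    rw [hcop, Nat.div_one]
  have hlower : q - 1 ∣ addOrderOf ε := by
    have hmap := addOrderOf_map_dvd ψ ε
    rwa [hψε, h3] at hmap
  exact Nat.dvd_antisymm hupper hlower
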